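/- arXiv:1802.03561 — 2 statements merged into one kernel-verified Lean document; each statement's English description precedes it below -/
import Mathlib

section
/- Let p be a prime, c₀ = 1 if p odd, c₀ = 2 if p = 2. Let x ∈ p^{c₀}·gl_{n₀}(ℤ_p) and let f ∈ ℚ[X_{ij}] be a polynomial in the entries of n₀×n₀ matrices. Then the limit as n → ∞ of (f(exp(p^n x)) - f(I))/p^n exists in ℚ_p and equals (df)_I(x) := Σ_{ij} (∂f/∂X_{ij})(I)·x_{ij}. -/
open Filter

/-- The matrix exponential power series over `ℚ_[p]`. -/
noncomputable def mexp {p : ℕ} [Fact p.Prime] {n : ℕ}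
    (x : Matrix (Fin n) (Fin n) ℚ_[p]) : Matrix (Fin n) (Fin n) ℚ_[p] :=
  ∑' k : ℕ, ((k.factorial : ℚ_[p]))⁻¹ • x ^ k

section aux
open MvPolynomial

variable {p : ℕ} [hp : Fact p.Prime] {n₀ : ℕ}

lemma aux_val_fact_le (k : ℕ) (hk : k ≠ 0) : padicValNat p (k.factorial) ≤ k - 1 := by
  have h := sub_one_mul_padicValNat_factorial (p := p) k
  have hlast : 0 < (Nat.digits p k).sum := by
    have hne : Nat.digits p k ≠ [] := Nat.digits_ne_nil_iff_ne_zero.mpr hk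
    have h1 : (Nat.digits p k).getLast hne ≠ 0 := Nat.getLast_digit_ne_zero p hk
    have h2 := List.single_le_sum (fun x _ => Nat.zero_le x) _ (List.getLast_mem hne)
    omega
  have h2 : padicValNat p k.factorial ≤ (p-1) * padicValNat p k.factorial :=
    Nat.le_mul_of_pos_left _ (by have := hp.out.two_le; omega)
  have h3 := Nat.digit_sum_le p k
  omega

lemma aux_norm_inv_fact_le (k : ℕ) (hk : k ≠ 0) :
    ‖((k.factorial : ℚ_[p]))⁻¹‖ ≤ (p : ℝ) ^ ((k : ℤ) - 1) := by
  have hf : (k.factorial : ℚ_[p]) ≠ 0 := Nat.cast_ne_zero.mpr k.factorial_ne_zero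
  rw [norm_inv, Padic.norm_eq_zpow_neg_valuation hf, Padic.valuation_natCast, ← zpow_neg, neg_neg]
  have hp1 : (1:ℝ) ≤ p := by exact_mod_cast hp.out.one_lt.le
  apply zpow_le_zpow_right₀ hp1
  have := aux_val_fact_le (p := p) k hk
  omega

lemma aux_pow_entry_norm_le (y : Matrix (Fin n₀) (Fin n₀) ℚ_[p]) {C : ℝ} (hC : 0 ≤ C)
    (hy : ∀ i j, ‖y i j‖ ≤ C) : ∀ k, k ≠ 0 → ∀ i j, ‖(y ^ k) i j‖ ≤ C ^ k := by
  intro k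
  induction k with
  | zero => tauto
  | succ k ih =>
    intro _ i j
    rw [pow_succ, Matrix.mul_apply]
    apply IsUltrametricDist.norm_sum_le_of_forall_le_of_nonneg (by positivity)
    intro l _
    rcases Nat.eq_zero_or_pos k with rfl | hk
    · simp only [pow_zero, Matrix.one_apply, pow_one]
      rcases eq_or_ne i l with rfl | hne
      · simpa using hy i j
      · simp [hne, hC]
    · calc ‖(y ^ k) i l * y l j‖ = ‖(y ^ k) i l‖ * ‖y l j‖ := norm_mul _ _
        _ ≤ C ^ k * C := mul_le_mul (ih hk.ne' i l) (hy l j) (norm_nonneg _) (by positivity)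
        _ = C ^ (k + 1) := (pow_succ C k).symm

section core
variable {c₀ : ℕ} (hc : 1 ≤ c₀) (x : Matrix (Fin n₀) (Fin n₀) ℚ_[p])
  (hx : ∀ i j, ‖x i j‖ ≤ (p : ℝ) ^ (-(c₀ : ℤ)))

-- term
noncomputable def T (x : Matrix (Fin n₀) (Fin n₀) ℚ_[p]) (n k : ℕ) (i j : Fin n₀) : ℚ_[p] :=
  ((k.factorial : ℚ_[p]))⁻¹ * ((((p : ℚ_[p]) ^ n • x) ^ k) i j)

include hc hx

lemma aux_T_norm_le (n k : ℕ) (hk : k ≠ 0) (i j : Fin n₀) :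
    ‖T x n k i j‖ ≤ (p : ℝ) ^ (-1 - (n : ℤ) * k) := by
  have hp1 : (1 : ℝ) < p := by exact_mod_cast hp.out.one_lt
  have hp0 : (0 : ℝ) < p := by positivity
  have hyC : ∀ i j, ‖((p : ℚ_[p]) ^ n • x) i j‖ ≤ (p : ℝ) ^ (-((n : ℤ) + 1)) := by
    intro i j
    rw [Matrix.smul_apply, smul_eq_mul, norm_mul, norm_pow]
    calc ‖(p : ℚ_[p])‖ ^ n * ‖x i j‖ ≤ ((p:ℝ)⁻¹) ^ n * (p : ℝ) ^ (-(c₀ : ℤ)) := by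
          rw [Padic.norm_p]
          exact mul_le_mul_of_nonneg_left (hx i j) (by positivity)
      _ = (p : ℝ) ^ (-(n : ℤ) + -(c₀ : ℤ)) := by
          rw [zpow_add₀ (ne_of_gt hp0)]
          congr 1
          rw [zpow_neg, zpow_natCast, inv_pow]
      _ ≤ (p : ℝ) ^ (-((n : ℤ) + 1)) := by
          apply zpow_le_zpow_right₀ hp1.le
          omega
  have h1 := aux_pow_entry_norm_le ((p : ℚ_[p]) ^ n • x) (by positivity) hyC k hk i j
  rw [T, ← zpow_natCast ((p:ℝ) ^ (-((n : ℤ) + 1))), ← zpow_mul] at *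
  calc ‖((k.factorial : ℚ_[p]))⁻¹ * ((((p : ℚ_[p]) ^ n • x) ^ k) i j)‖
      = ‖((k.factorial : ℚ_[p]))⁻¹‖ * ‖(((p : ℚ_[p]) ^ n • x) ^ k) i j‖ := norm_mul _ _
    _ ≤ (p : ℝ) ^ ((k : ℤ) - 1) * (p : ℝ) ^ (-((n : ℤ) + 1) * k) :=
        mul_le_mul (aux_norm_inv_fact_le k hk) h1 (norm_nonneg _) (by positivity)
    _ = (p : ℝ) ^ ((k : ℤ) - 1 + -((n : ℤ) + 1) * k) := by rw [← zpow_add₀ (ne_of_gt hp0)]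
    _ ≤ (p : ℝ) ^ (-1 - (n : ℤ) * k) := by
        apply zpow_le_zpow_right₀ hp1.le
        have : (0 : ℤ) ≤ k := Int.natCast_nonneg k
        nlinarith

lemma aux_T_summable (n : ℕ) (hn : n ≠ 0) (i j : Fin n₀) :
    Summable (fun k => T x n k i j) := by
  have hp1 : (1 : ℝ) < p := by exact_mod_cast hp.out.one_lt
  apply Summable.of_norm_bounded (g := fun k => ((p:ℝ)⁻¹) ^ k)
    (summable_geometric_of_lt_one (by positivity) (by
      rw [inv_lt_one_iff₀]; right; exact hp1))
  intro k
  rcases Nat.eq_zero_or_pos k with rfl | hk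
  · simp only [T, pow_zero, Nat.factorial_zero, Nat.cast_one, inv_one, one_mul]
    rw [Matrix.one_apply]
    split <;> simp
  · calc ‖T x n k i j‖ ≤ (p : ℝ) ^ (-1 - (n : ℤ) * k) := aux_T_norm_le hc x hx n k hk.ne' i j
      _ ≤ (p : ℝ) ^ (-(k : ℤ)) := by
          apply zpow_le_zpow_right₀ hp1.le
          have h1 : (1 : ℤ) ≤ (n : ℤ) := by exact_mod_cast Nat.one_le_iff_ne_zero.mpr hn
          nlinarith [Int.natCast_nonneg k]
      _ = ((p:ℝ)⁻¹) ^ k := by rw [inv_pow, ← zpow_natCast, ← zpow_neg]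

lemma aux_mexp_entry (n : ℕ) (hn : n ≠ 0) (i j : Fin n₀) :
    mexp ((p : ℚ_[p]) ^ n • x) i j = ∑' k, T x n k i j := by
  have hs : HasSum (fun k => ((k.factorial : ℚ_[p]))⁻¹ • ((p : ℚ_[p]) ^ n • x) ^ k)
      (Matrix.of fun i j => ∑' k, T x n k i j) := by
    apply Pi.hasSum.mpr
    intro i'
    rw [Pi.hasSum]
    intro j'
    exact (aux_T_summable hc x hx n hn i' j').hasSum
  rw [mexp, hs.tsum_eq]
  rfl
end core

section core2
variable {c₀ : ℕ} (hc : 1 ≤ c₀) (x : Matrix (Fin n₀) (Fin n₀) ℚ_[p])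
  (hx : ∀ i j, ‖x i j‖ ≤ (p : ℝ) ^ (-(c₀ : ℤ)))
include hc hx

lemma aux_entry_limit (i j : Fin n₀) :
    Tendsto (fun n : ℕ => (mexp ((p : ℚ_[p]) ^ n • x) i j
        - (1 : Matrix (Fin n₀) (Fin n₀) ℚ_[p]) i j) / (p : ℚ_[p]) ^ n)
      atTop (nhds (x i j)) := by
  have hp1 : (1 : ℝ) < p := by exact_mod_cast hp.out.one_lt
  have hp0 : (0 : ℝ) < p := by positivity
  have hpq : (p : ℚ_[p]) ≠ 0 := Nat.cast_ne_zero.mpr hp.out.ne_zero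
  rw [← tendsto_sub_nhds_zero_iff]
  apply squeeze_zero_norm' (a := fun n : ℕ => (p : ℝ) ^ (-1 - (n : ℤ)))
  · filter_upwards [eventually_gt_atTop 0] with n hn
    have hn' : n ≠ 0 := hn.ne'
    have hpn : ((p : ℚ_[p]) ^ n) ≠ 0 := pow_ne_zero _ hpq
    have hsum := aux_T_summable hc x hx n hn' i j
    have hsum1 : Summable (fun k => T x n (k + 1) i j) := (summable_nat_add_iff (f := fun k => T x n k i j) 1).mpr hsum
    have hsum2 : Summable (fun k => T x n (k + 2) i j) := (summable_nat_add_iff (f := fun k => T x n k i j) 2).mpr hsum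
    have hT0 : T x n 0 i j = (1 : Matrix (Fin n₀) (Fin n₀) ℚ_[p]) i j := by
      simp [T]
    have hT1 : T x n 1 i j = (p : ℚ_[p]) ^ n * x i j := by
      simp [T, Matrix.smul_apply, smul_eq_mul]
    have e1 : ∑' k, T x n k i j = T x n 0 i j + ∑' k, T x n (k + 1) i j :=
      Summable.tsum_eq_zero_add hsum
    have e2 : ∑' k, T x n (k + 1) i j = T x n 1 i j + ∑' k, T x n (k + 2) i j := by
      rw [Summable.tsum_eq_zero_add hsum1]
    have key : (mexp ((p : ℚ_[p]) ^ n • x) i j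
        - (1 : Matrix (Fin n₀) (Fin n₀) ℚ_[p]) i j) / (p : ℚ_[p]) ^ n - x i j
        = (∑' k, T x n (k + 2) i j) / (p : ℚ_[p]) ^ n := by
      rw [aux_mexp_entry hc x hx n hn' i j, e1, e2, hT0, hT1]
      field_simp
      ring
    rw [key, norm_div]
    have hpnorm : ‖(p : ℚ_[p]) ^ n‖ = (p : ℝ) ^ (-(n : ℤ)) := by
      rw [norm_pow, Padic.norm_p, inv_pow, ← zpow_natCast, ← zpow_neg]
    have hnorm_tsum : ‖∑' k, T x n (k + 2) i j‖ ≤ (p : ℝ) ^ (-1 - 2 * (n : ℤ)) := by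
      apply IsUltrametricDist.norm_tsum_le_of_forall_le_of_nonneg (by positivity)
      intro k
      have h1 := aux_T_norm_le hc x hx n (k + 2) (by omega) i j
      refine h1.trans (zpow_le_zpow_right₀ hp1.le ?_)
      have h2 : (1 : ℤ) ≤ (n : ℤ) := by exact_mod_cast Nat.one_le_iff_ne_zero.mpr hn'
      push_cast
      nlinarith [Int.natCast_nonneg k]
    rw [hpnorm]
    calc ‖∑' k, T x n (k + 2) i j‖ / (p : ℝ) ^ (-(n : ℤ))
        ≤ (p : ℝ) ^ (-1 - 2 * (n : ℤ)) / (p : ℝ) ^ (-(n : ℤ)) := by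
          gcongr
      _ = (p : ℝ) ^ (-1 - (n : ℤ)) := by
          rw [← zpow_sub₀ (ne_of_gt hp0)]
          congr 1
          ring
  · have h2 : (p : ℝ)⁻¹ < 1 := by rw [inv_lt_one_iff₀]; right; exact hp1
    have := (tendsto_pow_atTop_nhds_zero_of_lt_one (by positivity) h2).const_mul ((p : ℝ)⁻¹)
    simp only [mul_zero] at this
    convert this using 2 with n
    rw [zpow_sub₀ (ne_of_gt hp0), zpow_neg, zpow_natCast, zpow_one]
    field_simp
    rw [one_div, inv_pow, mul_inv_cancel₀ (by positivity)]
end core2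

lemma aux_poly_limit (A : ℕ → (Fin n₀ × Fin n₀) → ℚ_[p]) (c z : (Fin n₀ × Fin n₀) → ℚ_[p])
    (hA : ∀ ij, Tendsto (fun n : ℕ => (A n ij - c ij) / (p : ℚ_[p]) ^ n) atTop (nhds (z ij)))
    (f : MvPolynomial (Fin n₀ × Fin n₀) ℚ) :
    Tendsto (fun n : ℕ => ((aeval (A n)) f - (aeval c) f) / (p : ℚ_[p]) ^ n)
      atTop (nhds (∑ ij, (aeval c) (pderiv ij f) * z ij)) := by
  have hpq : (p : ℚ_[p]) ≠ 0 := Nat.cast_ne_zero.mpr hp.out.ne_zero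
  have hpow0 : Tendsto (fun n : ℕ => (p : ℚ_[p]) ^ n) atTop (nhds 0) := by
    apply tendsto_pow_atTop_nhds_zero_of_norm_lt_one
    rw [Padic.norm_p, inv_lt_one_iff₀]
    right
    exact_mod_cast hp.out.one_lt
  induction f using MvPolynomial.induction_on with
  | C a => simpa using tendsto_const_nhds
  | add f g hf hg =>
    convert hf.add hg using 2 with n
    · simp only [map_add]
      ring
    · simp only [map_add, add_mul, Finset.sum_add_distrib]
  | mul_X f ij hf =>
    have hF : Tendsto (fun n : ℕ => (aeval (A n)) f) atTop (nhds ((aeval c) f)) := by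
      have h2 := hf.mul hpow0
      rw [mul_zero] at h2
      have h3 := h2.add (tendsto_const_nhds (x := (aeval c) f))
      rw [zero_add] at h3
      apply h3.congr
      intro n
      rw [div_mul_cancel₀ _ (pow_ne_zero n hpq), sub_add_cancel]
    have lim := (hF.mul (hA ij)).add (hf.mul_const (c ij))
    have hfun : ∀ n : ℕ, (aeval (A n)) f * ((A n ij - c ij) / (p : ℚ_[p]) ^ n)
        + ((aeval (A n)) f - (aeval c) f) / (p : ℚ_[p]) ^ n * c ij
        = ((aeval (A n)) (f * X ij) - (aeval c) (f * X ij)) / (p : ℚ_[p]) ^ n := by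
      intro n
      have hpn : ((p : ℚ_[p]) ^ n) ≠ 0 := pow_ne_zero _ hpq
      simp only [map_mul, aeval_X]
      field_simp
      ring
    have hval : (aeval c) f * z ij + (∑ kl, (aeval c) (pderiv kl f) * z kl) * c ij
        = ∑ kl, (aeval c) (pderiv kl (f * X ij)) * z kl := by
      have h1 : ∀ kl : Fin n₀ × Fin n₀, (aeval c) (pderiv kl (f * X ij)) * z kl
          = (aeval c) (pderiv kl f) * z kl * c ij
            + (if ij = kl then (aeval c) f * z kl else 0) := by
        intro kl
        classical
        rw [pderiv_mul, map_add, map_mul, map_mul, aeval_X, pderiv_X, Pi.single_apply]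
        split_ifs with h
        · simp only [map_one, mul_one]
          ring
        · simp only [map_zero, mul_zero, add_zero]
          ring
      rw [Finset.sum_congr rfl (fun kl _ => h1 kl), Finset.sum_add_distrib,
        Finset.sum_ite_eq, ← Finset.sum_mul]
      simp [add_comm]
    rw [← hval]
    exact lim.congr hfun

end aux

/-- For a prime `p`, `c₀ = 1` if `p` odd and `c₀ = 2` if `p = 2`,
`x ∈ p^{c₀}·gl_{n₀}(ℤ_p)` and a polynomial `f ∈ ℚ[X_{ij}]` in the matrix entries,
the limit of `(f(exp(p^n x)) - f(I))/p^n` as `n → ∞` exists in `ℚ_p` and equals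
`(df)_I(x) = Σ_{ij} (∂f/∂X_{ij})(I)·x_{ij}`. -/
theorem stmt_3 (p : ℕ) [Fact p.Prime] (n₀ : ℕ) (c₀ : ℕ)
    (hc : c₀ = if p = 2 then 2 else 1)
    (x : Matrix (Fin n₀) (Fin n₀) ℚ_[p])
    (hx : ∀ i j, ‖x i j‖ ≤ (p : ℝ) ^ (-(c₀ : ℤ)))
    (f : MvPolynomial (Fin n₀ × Fin n₀) ℚ) :
    Tendsto
      (fun n : ℕ =>
        ((MvPolynomial.aeval fun ij : Fin n₀ × Fin n₀ =>
            (mexp ((p : ℚ_[p]) ^ n • x)) ij.1 ij.2) f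
          - (MvPolynomial.aeval fun ij : Fin n₀ × Fin n₀ =>
              (1 : Matrix (Fin n₀) (Fin n₀) ℚ_[p]) ij.1 ij.2) f) / (p : ℚ_[p]) ^ n)
      atTop
      (nhds (∑ ij : Fin n₀ × Fin n₀,
        (MvPolynomial.aeval fun kl : Fin n₀ × Fin n₀ =>
          (1 : Matrix (Fin n₀) (Fin n₀) ℚ_[p]) kl.1 kl.2) (MvPolynomial.pderiv ij f)
          * x ij.1 ij.2)) := by
  have hc1 : 1 ≤ c₀ := by rw [hc]; split <;> norm_num
  exact aux_poly_limit (fun n ij => mexp ((p : ℚ_[p]) ^ n • x) ij.1 ij.2)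
    (fun ij => (1 : Matrix (Fin n₀) (Fin n₀) ℚ_[p]) ij.1 ij.2) (fun ij => x ij.1 ij.2)
    (fun ij => aux_entry_limit hc1 x hx ij.1 ij.2) f
end

section
/- Let A be a PID with fraction field F, let G be an affine F-subvariety of GL_{n₀} defined by an ideal I of F[GL_{n₀}], and let 𝒢 be its schematic closure in GL_{n₀} over A, i.e. Spec(A[GL_{n₀}]/(A[GL_{n₀}] ∩ I)). Then for any A-algebra R which is free as an A-module, the R-points 𝒢(R) are naturally identified with G(R ⊗_A F) ∩ GL_{n₀}(R). -/
open scoped TensorProduct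

/-- Clearing denominators for multivariate polynomials over a fraction field. -/
lemma exists_denom_clear {A : Type*} [CommRing A] (F : Type*) [Field F] [Algebra A F]
    [IsFractionRing A F] {σ : Type*} (p : MvPolynomial σ F) :
    ∃ b : nonZeroDivisors A, ∃ q : MvPolynomial σ A,
      MvPolynomial.map (algebraMap A F) q = MvPolynomial.C (algebraMap A F b) * p := by
  induction p using MvPolynomial.induction_on with
  | C a =>
      obtain ⟨b, c, hc⟩ := IsLocalization.exists_integer_multiple (nonZeroDivisors A) a
      exact ⟨b, MvPolynomial.C c, by rw [MvPolynomial.map_C, hc, Algebra.smul_def, map_mul]⟩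
  | add p q hp hq =>
      obtain ⟨b₁, q₁, h₁⟩ := hp
      obtain ⟨b₂, q₂, h₂⟩ := hq
      refine ⟨b₁ * b₂, MvPolynomial.C (b₂ : A) * q₁ + MvPolynomial.C (b₁ : A) * q₂, ?_⟩
      rw [map_add, map_mul, map_mul, MvPolynomial.map_C, MvPolynomial.map_C, h₁, h₂,
        Submonoid.coe_mul, map_mul, MvPolynomial.C_mul]
      ring
  | mul_X p i hp =>
      obtain ⟨b, q, h⟩ := hp
      exact ⟨b, q * MvPolynomial.X i, by rw [map_mul, MvPolynomial.map_X, h, mul_assoc]⟩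

/-- The map `R → F ⊗[A] R`, `x ↦ 1 ⊗ x`, is injective when `R` is `A`-free and
`F` is the fraction field of the domain `A`. -/
lemma tmul_one_inj (A : Type*) [CommRing A] [IsDomain A]
    (F : Type*) [Field F] [Algebra A F] [IsFractionRing A F]
    (R : Type*) [CommRing R] [Algebra A R] [Module.Free A R]
    (x : R) (h : (1 : F) ⊗ₜ[A] x = 0) : x = 0 := by
  have hinj : Function.Injective (LinearMap.rTensor R (Algebra.linearMap A F)) :=
    Module.Flat.rTensor_preserves_injective_linearMap _ (IsFractionRing.injective A F)
  have h2 := hinj (a₁ := (TensorProduct.lid A R).symm x) (a₂ := 0) (by simpa using h)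
  have := congrArg (TensorProduct.lid A R) h2
  simpa using this

/-- Evaluating a polynomial with coefficients in `A` at `1 ⊗ x` commutes with `x ↦ 1 ⊗ x`. -/
lemma aeval_tmul {A : Type*} [CommRing A] {F : Type*} [Field F] [Algebra A F]
    {R : Type*} [CommRing R] [Algebra A R] {σ : Type*} (x : σ → R)
    (q : MvPolynomial σ A) :
    (MvPolynomial.aeval fun i => ((1 : F) ⊗ₜ[A] x i : F ⊗[A] R))
        (MvPolynomial.map (algebraMap A F) q)
      = (1 : F) ⊗ₜ[A] (MvPolynomial.aeval x q) := by
  rw [MvPolynomial.aeval_map_algebraMap]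
  exact (MvPolynomial.comp_aeval_apply (f := x)
    (φ := (Algebra.TensorProduct.includeRight : R →ₐ[A] F ⊗[A] R)) q).symm

/-- Let `A` be a PID with fraction field `F`, and let `G ⊆ GL_{n}` be the
affine `F`-subvariety cut out by an ideal `I` of polynomials in the matrix entries. Let
`𝒢` be the schematic closure of `G` over `A`, cut out by `I ∩ A[GL_n]` (the preimage of
`I` under `A[X_{ij}] → F[X_{ij}]`). Then for any `A`-algebra `R` that is free as an
`A`-module, the `R`-points of `𝒢` are naturally identified with
`G(R ⊗_A F) ∩ GL_n(R)`: an invertible matrix `g` over `R` satisfies the equations of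
`I ∩ A[GL_n]` iff its image in `F ⊗_A R ≅ R ⊗_A F` satisfies the equations of `I`. -/
theorem stmt_9 (A : Type*) [CommRing A] [IsDomain A] [IsPrincipalIdealRing A]
    (F : Type*) [Field F] [Algebra A F] [IsFractionRing A F]
    (n : ℕ) (I : Ideal (MvPolynomial (Fin n × Fin n) F))
    (R : Type*) [CommRing R] [Algebra A R] [Module.Free A R]
    (g : Matrix (Fin n) (Fin n) R) (hg : IsUnit g.det) :
    (∀ f ∈ Ideal.comap (MvPolynomial.map (algebraMap A F)) I,
      (MvPolynomial.aeval fun ij : Fin n × Fin n => g ij.1 ij.2) f = (0 : R))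
    ↔ (∀ f ∈ I,
      (MvPolynomial.aeval fun ij : Fin n × Fin n =>
        ((1 : F) ⊗ₜ[A] g ij.1 ij.2 : F ⊗[A] R)) f = 0) := by
  constructor
  · intro H f hf
    obtain ⟨b, q, hq⟩ := exists_denom_clear (A := A) F f
    have hqI : q ∈ Ideal.comap (MvPolynomial.map (algebraMap A F)) I := by
      rw [Ideal.mem_comap, hq]
      exact Ideal.mul_mem_left _ _ hf
    have h0 : (MvPolynomial.aeval fun ij : Fin n × Fin n => g ij.1 ij.2) q = 0 := H q hqI
    have key := aeval_tmul (F := F) (fun ij : Fin n × Fin n => g ij.1 ij.2) q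
    rw [hq, h0, TensorProduct.tmul_zero, map_mul, MvPolynomial.aeval_C] at key
    have hc : IsUnit (algebraMap F (F ⊗[A] R) (algebraMap A F b)) := by
      refine (IsUnit.map _ (isUnit_iff_ne_zero.2 ?_))
      exact (map_ne_zero_iff _ (IsFractionRing.injective A F)).2 (nonZeroDivisors.coe_ne_zero b)
    exact (hc.mul_right_eq_zero).1 key
  · intro H f hf
    rw [Ideal.mem_comap] at hf
    have h0 := H _ hf
    rw [aeval_tmul (F := F) (fun ij : Fin n × Fin n => g ij.1 ij.2) f] at h0
    exact tmul_one_inj A F R _ h0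
end
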